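/- arXiv:1411.5329 — 11 statements merged into one kernel-verified Lean document; each statement's English description precedes it below -/
import Mathlib

section
/- Given a nondegenerate simplex with vertices v₁,…,vₙ in ℝ^{n-1} and a point array x₁,…,xₙ in a metric space X, there exists a unique quadratic form W on ℝ^{n-1} satisfying W(vᵢ - vⱼ) = dist(xᵢ, xⱼ)² for all i, j. -/
/-- existence and uniqueness of the associated quadratic form. -/
theorem associated_form_exists_unique (n : ℕ) (X : Type*) [MetricSpace X]
    (v : Fin (n + 1) → (Fin n → ℝ)) (hv : AffineIndependent ℝ v)
    (x : Fin (n + 1) → X) :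
    ∃! W : QuadraticForm ℝ (Fin n → ℝ),
      ∀ i j, W (v i - v j) = dist (x i) (x j) ^ 2 := by
  classical
  obtain _ | m := n
  · refine ⟨0, ?_, ?_⟩
    · intro i j
      have : i = j := Fin.ext (by omega)
      subst this
      simp
    · intro W _
      ext a
      have : a = 0 := Subsingleton.elim a 0
      rw [this, QuadraticMap.map_zero, QuadraticMap.map_zero]
  · set i0 : Fin (m + 1 + 1) := Fin.last (m + 1) with hi0
    have hli : LinearIndependent ℝ
        (fun i : {i : Fin (m + 1 + 1) // i ≠ i0} => v i - v i0) := by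
      rw [affineIndependent_iff_linearIndependent_vsub ℝ v i0] at hv
      exact hv
    haveI : Nonempty {i : Fin (m + 1 + 1) // i ≠ i0} :=
      ⟨⟨0, by simp [hi0, Fin.ext_iff]⟩⟩
    have hcard : Fintype.card {i : Fin (m + 1 + 1) // i ≠ i0}
        = Module.finrank ℝ (Fin (m + 1) → ℝ) := by
      simp [Module.finrank_fin_fun]
    set b := basisOfLinearIndependentOfCardEqFinrank hli hcard with hb
    have hbcoe : ∀ i : {i : Fin (m + 1 + 1) // i ≠ i0}, b i = v i - v i0 := by
      intro i
      rw [hb, coe_basisOfLinearIndependentOfCardEqFinrank]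
    set F : Fin (m + 1 + 1) → Fin (m + 1 + 1) → ℝ := fun p q =>
      (dist (x p) (x i0) ^ 2 + dist (x q) (x i0) ^ 2 - dist (x p) (x q) ^ 2) / 2
      with hF
    set B : LinearMap.BilinForm ℝ (Fin (m + 1) → ℝ) :=
      b.constr ℝ (fun i => b.constr ℝ (fun j => F i j)) with hB
    have key : ∀ p q : Fin (m + 1 + 1), B (v p - v i0) (v q - v i0) = F p q := by
      intro p q
      by_cases hp : p = i0
      · subst hp
        simp [hF, dist_comm, dist_self]
      · by_cases hq : q = i0
        · subst hq
          simp [hF, dist_comm, dist_self]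
        · rw [← hbcoe ⟨p, hp⟩, ← hbcoe ⟨q, hq⟩, hB, Module.Basis.constr_basis,
            Module.Basis.constr_basis]
    have expand : ∀ u w : Fin (m + 1) → ℝ,
        B (u - w) (u - w) = B u u - B u w - B w u + B w w := by
      intro u w
      simp only [map_sub, LinearMap.sub_apply]
      ring
    refine ⟨B.toQuadraticMap, ?_, ?_⟩
    · intro i j
      have h1 : v i - v j = (v i - v i0) - (v j - v i0) := by abel
      rw [LinearMap.BilinMap.toQuadraticMap_apply, h1, expand, key, key, key, key]
      simp only [hF]
      rw [dist_comm (x j) (x i), dist_self, dist_self]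
      ring
    · intro W hW
      have hassoc : ∀ (W' : QuadraticForm ℝ (Fin (m + 1) → ℝ)),
          (∀ i j, W' (v i - v j) = dist (x i) (x j) ^ 2) →
          ∀ p q : Fin (m + 1 + 1),
            QuadraticMap.associatedHom ℕ W' (v p - v i0) (v q - v i0) =
            -((⅟ (2 : Module.End ℝ ℝ)) • (dist (x p) (x q) ^ 2
              - dist (x p) (x i0) ^ 2 - dist (x q) (x i0) ^ 2)) := by
        intro W' hW' p q
        rw [← neg_neg (v q - v i0), map_neg, QuadraticMap.associated_apply]
        have h2 : (v p - v i0) + -(v q - v i0) = v p - v q := by abel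
        rw [h2, QuadraticMap.map_neg, hW' p q, hW' p i0, hW' q i0]
      have hWB : ∀ i j, (B.toQuadraticMap : QuadraticForm ℝ (Fin (m + 1) → ℝ))
          (v i - v j) = dist (x i) (x j) ^ 2 := by
        intro i j
        have h1 : v i - v j = (v i - v i0) - (v j - v i0) := by abel
        rw [LinearMap.BilinMap.toQuadraticMap_apply, h1, expand, key, key, key, key]
        simp only [hF]
        rw [dist_comm (x j) (x i), dist_self, dist_self]
        ring
      have hA : QuadraticMap.associatedHom ℕ W
          = QuadraticMap.associatedHom ℕ B.toQuadraticMap := by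
        refine b.ext fun i => b.ext fun j => ?_
        rw [hbcoe i, hbcoe j, hassoc W hW, hassoc B.toQuadraticMap hWB]
      calc W = (QuadraticMap.associatedHom ℕ W).toQuadraticMap :=
              (QuadraticMap.toQuadraticMap_associated ℕ W).symm
        _ = (QuadraticMap.associatedHom ℕ B.toQuadraticMap).toQuadraticMap := by
              rw [hA]
        _ = B.toQuadraticMap := QuadraticMap.toQuadraticMap_associated ℕ _
end

section
/- Let x₁,…,xₙ be points in a metric space X, and let W be the associated quadratic form on ℝ^{n-1} with respect to a nondegenerate simplex with vertices v₁,…,vₙ (i.e., W(vᵢ - vⱼ) = dist(xᵢ,xⱼ)² for all i,j). Then the array (x₁,…,xₙ) is isometric to an array of points in Euclidean space ℝ^{n-1} if and only if W(v) ≥ 0 for all v ∈ ℝ^{n-1}. -/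
open QuadraticMap Matrix
open scoped MatrixOrder

/-- the array is isometric to a Euclidean array iff W ≥ 0. -/
theorem isometric_to_euclidean_iff_nonneg (n : ℕ) (X : Type*) [MetricSpace X]
    (v : Fin (n + 1) → (Fin n → ℝ)) (hv : AffineIndependent ℝ v)
    (x : Fin (n + 1) → X)
    (W : QuadraticForm ℝ (Fin n → ℝ))
    (hW : ∀ i j, W (v i - v j) = dist (x i) (x j) ^ 2) :
    (∃ y : Fin (n + 1) → EuclideanSpace ℝ (Fin n),
        ∀ i j, dist (x i) (x j) = ‖y i - y j‖) ↔ (∀ u, 0 ≤ W u) := by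
  set B : LinearMap.BilinForm ℝ (Fin n → ℝ) := QuadraticMap.associatedHom ℝ W with hB
  have hBW : ∀ u, B u u = W u := fun u => associated_eq_self_apply ℝ W u
  have hBsymm : ∀ a b, B a b = B b a := by
    intro a b
    rw [hB]
    simpa using (QuadraticMap.associated_isSymm ℝ W) a b
  have key2 : ∀ a b, 2 * B a b = W a + W b - W (a - b) := by
    intro a b
    have h1 : W (a - b) = B a a - B a b - B b a + B b b := by
      rw [← hBW]
      simp only [LinearMap.map_sub, LinearMap.sub_apply]
      ring
    linarith [h1, hBW a, hBW b, hBsymm a b]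
  constructor
  · rintro ⟨y, hy⟩ u
    rcases Nat.eq_zero_or_pos n with h0 | hn
    · subst h0
      have hu : u = 0 := funext fun i => i.elim0
      rw [hu, QuadraticMap.map_zero]
    · haveI : Nonempty {i : Fin (n + 1) // i ≠ (0 : Fin (n + 1))} :=
        ⟨⟨⟨1, Nat.succ_lt_succ hn⟩, fun h => by simpa using congrArg Fin.val h⟩⟩
      have hli := (affineIndependent_iff_linearIndependent_vsub ℝ v 0).mp hv
      have hcard : Fintype.card {i : Fin (n + 1) // i ≠ (0 : Fin (n + 1))}
          = Module.finrank ℝ (Fin n → ℝ) := by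
        simp [Fintype.card_subtype_compl, Module.finrank_fintype_fun_eq_card]
      let b := basisOfLinearIndependentOfCardEqFinrank hli hcard
      have hb : ∀ i, b i = v i.1 - v 0 := by
        intro i
        simp [b, coe_basisOfLinearIndependentOfCardEqFinrank, vsub_eq_sub]
      let T : (Fin n → ℝ) →ₗ[ℝ] EuclideanSpace ℝ (Fin n) :=
        b.constr ℝ (fun i => y i.1 - y 0)
      have hT : ∀ i, T (b i) = y i.1 - y 0 := fun i => b.constr_basis ℝ _ i
      let B' : LinearMap.BilinForm ℝ (Fin n → ℝ) :=
        LinearMap.compl₁₂ (innerₗ (EuclideanSpace ℝ (Fin n))) T T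
      have hB' : ∀ a c, B' a c = inner ℝ (T a) (T c) := fun a c => rfl
      have hBB' : B = B' := by
        refine b.ext fun i => b.ext fun j => ?_
        have h2 : 2 * B (b i) (b j) = 2 * B' (b i) (b j) := by
          rw [key2, hB', hT, hT, hb i, hb j]
          have e3 : v i.1 - v 0 - (v j.1 - v 0) = v i.1 - v j.1 := by abel
          rw [e3, hW, hW, hW]
          have hnorm := norm_sub_sq_real (y i.1 - y 0) (y j.1 - y 0)
          have e2 : (y i.1 - y 0) - (y j.1 - y 0) = y i.1 - y j.1 := by abel
          rw [e2] at hnorm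
          rw [hy i.1 0, hy j.1 0, hy i.1 j.1]
          linarith
        linarith
      rw [← hBW u, hBB', hB']
      exact real_inner_self_nonneg
  · intro hpos
    set M : Matrix (Fin n) (Fin n) ℝ := LinearMap.toMatrix₂' ℝ B with hM
    have hMB : Matrix.toLinearMap₂' ℝ M = B := by
      rw [hM]
      exact (LinearMap.toMatrix₂' ℝ).symm_apply_apply B
    have hMu : ∀ u, u ⬝ᵥ (M *ᵥ u) = W u := by
      intro u
      rw [← hBW u, ← hMB]
      exact (Matrix.toLinearMap₂'_apply' M u u).symm
    have hherm : M.IsHermitian := by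
      have : Mᴴ = M := by
        ext i j
        rw [Matrix.conjTranspose_apply, star_trivial, hM, LinearMap.toMatrix₂'_apply,
          LinearMap.toMatrix₂'_apply, hBsymm]
      exact this
    have hpsd : M.PosSemidef := .of_dotProduct_mulVec_nonneg hherm (fun u => by
      rw [star_trivial, hMu]; exact hpos u)
    set S := CFC.sqrt M with hS
    have hSS : S * S = M := CFC.sqrt_mul_sqrt_self M hpsd.nonneg
    have hSt : Sᵀ = S := by
      ext i j
      rw [Matrix.transpose_apply]
      simpa using ((CFC.sqrt_nonneg M).posSemidef.isHermitian.apply j i).symm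
    refine ⟨fun i => (WithLp.equiv 2 (Fin n → ℝ)).symm (S *ᵥ v i), fun i j => ?_⟩
    have hsub : (WithLp.equiv 2 (Fin n → ℝ)).symm (S *ᵥ v i)
        - (WithLp.equiv 2 (Fin n → ℝ)).symm (S *ᵥ v j)
        = (WithLp.equiv 2 (Fin n → ℝ)).symm (S *ᵥ (v i - v j)) := by
      rw [Matrix.mulVec_sub, WithLp.equiv_symm_apply, WithLp.toLp_sub]
    rw [hsub]
    set u := v i - v j with hu
    have hnorm : ‖(WithLp.equiv 2 (Fin n → ℝ)).symm (S *ᵥ u)‖ ^ 2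
        = (S *ᵥ u) ⬝ᵥ (S *ᵥ u) := by
      rw [← real_inner_self_eq_norm_sq, PiLp.inner_apply]
      simp [dotProduct, RCLike.inner_apply, _root_.sq]
    have hmv : S *ᵥ u = u ᵥ* S := by
      calc S *ᵥ u = u ᵥ* Sᵀ := (Matrix.vecMul_transpose S u).symm
      _ = u ᵥ* S := by rw [hSt]
    have hdot : (S *ᵥ u) ⬝ᵥ (S *ᵥ u) = dist (x i) (x j) ^ 2 := by
      rw [Matrix.dotProduct_mulVec, hmv, Matrix.vecMul_vecMul, hSS,
        ← Matrix.dotProduct_mulVec, hMu, hu, hW]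
    have heq : dist (x i) (x j) ^ 2
        = ‖(WithLp.equiv 2 (Fin n → ℝ)).symm (S *ᵥ u)‖ ^ 2 := by
      rw [hnorm, hdot]
    rw [show dist (x i) (x j) = Real.sqrt (dist (x i) (x j) ^ 2) from
        (Real.sqrt_sq dist_nonneg).symm, heq, Real.sqrt_sq (norm_nonneg _)]
end

section
/- For n = 3: let x₁, x₂, x₃ be points in a set X equipped with a symmetric nonnegative 'distance' function d vanishing on the diagonal, and let W be the quadratic form on ℝ² determined by W(vᵢ - vⱼ) = d(xᵢ,xⱼ)² for the vertices v₁, v₂, v₃ of a nondegenerate triangle. Then W is positive semidefinite if and only if all three triangle inequalities d(xᵢ,xⱼ) ≤ d(xᵢ,x_k) + d(x_k,xⱼ) hold. -/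
private lemma disc_of_nonneg (A B C : ℝ)
    (h : ∀ x y : ℝ, 0 ≤ A*x^2 + B*x*y + C*y^2) : B^2 ≤ 4*A*C := by
  have hA : 0 ≤ A := by have := h 1 0; linarith
  have hC : 0 ≤ C := by have := h 0 1; linarith
  rcases eq_or_lt_of_le hA with hA0 | hA0
  · by_cases hB : B = 0
    · rw [hB]; nlinarith
    · exfalso
      have := h ((-C - 1)/B) 1
      rw [← hA0] at this
      field_simp at this
      rw [le_div_iff₀ (lt_of_le_of_ne (sq_nonneg B) (Ne.symm (pow_ne_zero 2 hB)))] at this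
      rcases abs_cases B with ⟨h1, h2⟩ | ⟨h1, h2⟩ <;> nlinarith [lt_of_le_of_ne (sq_nonneg B) (Ne.symm (pow_ne_zero 2 hB))]
  · have := h (-B) (2*A)
    nlinarith

private lemma nonneg_of_disc (A B C : ℝ) (hA : 0 ≤ A) (hC : 0 ≤ C)
    (hB : B^2 ≤ 4*A*C) (x y : ℝ) : 0 ≤ A*x^2 + B*x*y + C*y^2 := by
  rcases eq_or_lt_of_le hA with hA0 | hA0
  · have hB0 : B = 0 := by nlinarith
    rw [hB0, ← hA0]; nlinarith [sq_nonneg y]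
  · nlinarith [sq_nonneg (2*A*x + B*y), mul_nonneg (sub_nonneg.2 hB) (sq_nonneg y)]

/-- for three points, W is positive semidefinite iff all three
triangle inequalities hold. -/
theorem three_point_form_nonneg_iff_triangle (X : Type*) (d : X → X → ℝ)
    (hsymm : ∀ a b, d a b = d b a) (hnonneg : ∀ a b, 0 ≤ d a b)
    (hdiag : ∀ a, d a a = 0)
    (x₁ x₂ x₃ : X)
    (v : Fin 3 → (Fin 2 → ℝ))
    (hv0 : v 0 = ![1, 0]) (hv1 : v 1 = ![0, 1]) (hv2 : v 2 = ![0, 0])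
    (W : QuadraticForm ℝ (Fin 2 → ℝ))
    (hW12 : W (v 0 - v 1) = d x₁ x₂ ^ 2)
    (hW13 : W (v 0 - v 2) = d x₁ x₃ ^ 2)
    (hW23 : W (v 1 - v 2) = d x₂ x₃ ^ 2) :
    (∀ u, 0 ≤ W u) ↔
      (d x₁ x₂ ≤ d x₁ x₃ + d x₃ x₂ ∧
       d x₁ x₃ ≤ d x₁ x₂ + d x₂ x₃ ∧
       d x₂ x₃ ≤ d x₂ x₁ + d x₁ x₃) := by
  set a := d x₁ x₂ with ha'
  set b := d x₁ x₃ with hb'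
  set c := d x₂ x₃ with hc'
  have ha : 0 ≤ a := hnonneg _ _
  have hb : 0 ≤ b := hnonneg _ _
  have hc : 0 ≤ c := hnonneg _ _
  have hs32 : d x₃ x₂ = c := hsymm _ _
  have hs21 : d x₂ x₁ = a := (hsymm _ _).symm ▸ rfl
  rw [hs32, show d x₂ x₁ = a from hsymm x₂ x₁]
  -- basis vectors
  have he1 : W ![1,0] = b^2 := by
    rw [← hW13, hv0, hv2]; congr 1; funext i; fin_cases i <;> simp
  have he2 : W ![0,1] = c^2 := by
    rw [← hW23, hv1, hv2]; congr 1; funext i; fin_cases i <;> simp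
  have he12 : W (![1,0] - ![0,1]) = a^2 := by
    rw [← hW12, hv0, hv1]
  have hpolar : QuadraticMap.polar W ![1,0] ![0,1] = b^2 + c^2 - a^2 := by
    have h1 : W (![1,0] - ![0,1]) =
        W ![1,0] + W ![0,1] + QuadraticMap.polar W ![1,0] (-![0,1]) := by
      rw [sub_eq_add_neg, QuadraticMap.map_add W, QuadraticMap.map_neg]
    rw [QuadraticMap.polar_neg_right] at h1
    rw [he12, he1, he2] at h1
    linarith
  have expand : ∀ x y : ℝ, W ![x, y] =
      b^2*x^2 + (b^2 + c^2 - a^2)*x*y + c^2*y^2 := by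
    intro x y
    have hu : (![x, y] : Fin 2 → ℝ) = x • ![1,0] + y • ![0,1] := by
      funext i; fin_cases i <;> simp
    rw [hu, QuadraticMap.map_add W, QuadraticMap.map_smul, QuadraticMap.map_smul,
      QuadraticMap.polar_smul_left, QuadraticMap.polar_smul_right,
      he1, he2, hpolar]
    ring_nf
  constructor
  · intro h
    have hd : (b^2 + c^2 - a^2)^2 ≤ 4*(b^2)*(c^2) := by
      apply disc_of_nonneg
      intro x y
      have := h ![x, y]
      rwa [expand] at this
    have hbc : 0 ≤ b*c := mul_nonneg hb hc
    have hp1 : -(2*b*c) ≤ b^2 + c^2 - a^2 := by nlinarith [hbc, hd]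
    have hp2 : b^2 + c^2 - a^2 ≤ 2*b*c := by nlinarith [hbc, hd]
    refine ⟨by nlinarith [hp1, ha, hb, hc], by nlinarith [hp2, ha, hb, hc],
      by nlinarith [hp2, ha, hb, hc]⟩
  · rintro ⟨h1, h2, h3⟩ u
    have hu : u = ![u 0, u 1] := by funext i; fin_cases i <;> simp
    rw [hu, expand]
    apply nonneg_of_disc _ _ _ (sq_nonneg b) (sq_nonneg c)
    have key : 4*b^2*c^2 - (b^2+c^2-a^2)^2 = (a+b+c)*((b+c-a)*((a+c-b)*(a+b-c))) := by
      ring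
    have hprod : 0 ≤ (a+b+c)*((b+c-a)*((a+c-b)*(a+b-c))) :=
      mul_nonneg (by linarith) (mul_nonneg (by linarith)
        (mul_nonneg (by linarith) (by linarith)))
    linarith
end

section
/- Let x₁, x₂, x₃, x₄ be points in a metric space X and let W be the associated quadratic form on ℝ³ with respect to a nondegenerate tetrahedron. Then W is nonnegative on each of the four 2-dimensional linear subspaces parallel to the faces of the tetrahedron; consequently W has at most one negative eigenvalue. -/
/-- the associated form of a quadruple is nonnegative on the four
planes parallel to the faces of the tetrahedron; consequently it has at most one
negative eigenvalue (no 2-dimensional negative definite subspace). -/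
theorem four_point_form_faces_nonneg (X : Type*) [MetricSpace X] (x : Fin 4 → X)
    (v : Fin 4 → (Fin 3 → ℝ)) (hv : AffineIndependent ℝ v)
    (W : QuadraticForm ℝ (Fin 3 → ℝ))
    (hW : ∀ i j, W (v i - v j) = dist (x i) (x j) ^ 2) :
    (∀ i : Fin 4,
      ∀ u ∈ Submodule.span ℝ {u | ∃ j k, j ≠ i ∧ k ≠ i ∧ u = v j - v k}, 0 ≤ W u) ∧
    ¬ ∃ V : Submodule ℝ (Fin 3 → ℝ), Module.finrank ℝ V = 2 ∧
        ∀ u ∈ V, u ≠ 0 → W u < 0 := by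
  have key : ∀ i : Fin 4,
      ∀ u ∈ Submodule.span ℝ {u | ∃ j k, j ≠ i ∧ k ≠ i ∧ u = v j - v k}, 0 ≤ W u := by
    intro i u hu
    set a := i.succAbove 0 with ha
    set b := i.succAbove 1 with hb
    set c := i.succAbove 2 with hc
    set e1 := v a - v c with he1
    set e2 := v b - v c with he2
    have hcase : ∀ j : Fin 4, j ≠ i → j = a ∨ j = b ∨ j = c := by
      have : ∀ i j : Fin 4, j ≠ i →
          j = i.succAbove 0 ∨ j = i.succAbove 1 ∨ j = i.succAbove 2 := by decide
      exact this i
    have hsub : Submodule.span ℝ {u | ∃ j k, j ≠ i ∧ k ≠ i ∧ u = v j - v k} ≤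
        Submodule.span ℝ ({e1, e2} : Set (Fin 3 → ℝ)) := by
      rw [Submodule.span_le]
      rintro w ⟨j, k, hj, hk, rfl⟩
      have hmem : ∀ j : Fin 4, j ≠ i →
          v j - v c ∈ Submodule.span ℝ ({e1, e2} : Set (Fin 3 → ℝ)) := by
        intro j hj
        rcases hcase j hj with rfl | rfl | rfl
        · exact Submodule.subset_span (Set.mem_insert _ _)
        · exact Submodule.subset_span (Set.mem_insert_of_mem _ rfl)
        · rw [sub_self]; exact (Submodule.span ℝ ({e1, e2} : Set (Fin 3 → ℝ))).zero_mem
      rw [← sub_sub_sub_cancel_right (v j) (v k) (v c)]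
      exact Submodule.sub_mem _ (hmem j hj) (hmem k hk)
    obtain ⟨s, t, rfl⟩ := Submodule.mem_span_pair.mp (hsub hu)
    have hpolar : QuadraticMap.polar ⇑W e1 e2 = W e1 + W e2 - W (e1 - e2) := by
      have h := QuadraticMap.map_add (⇑W) e1 (-e2)
      rw [← sub_eq_add_neg] at h
      rw [h, QuadraticMap.polar_neg_right, QuadraticMap.map_neg]
      ring
    have hexp : W (s • e1 + t • e2) =
        s * s * W e1 + t * t * W e2 + s * t * (W e1 + W e2 - W (e1 - e2)) := by
      rw [QuadraticMap.map_add (⇑W) (s • e1) (t • e2),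
        QuadraticMap.polar_smul_left, QuadraticMap.polar_smul_right,
        QuadraticMap.map_smul, QuadraticMap.map_smul, hpolar]
      simp only [smul_eq_mul]
      ring
    have hW1 : W e1 = dist (x a) (x c) ^ 2 := hW a c
    have hW2 : W e2 = dist (x b) (x c) ^ 2 := hW b c
    have hW3 : W (e1 - e2) = dist (x a) (x b) ^ 2 := by
      rw [he1, he2, sub_sub_sub_cancel_right]; exact hW a b
    rw [hexp, hW1, hW2, hW3]
    set p := dist (x a) (x c)
    set q := dist (x b) (x c)
    set r := dist (x a) (x b)
    have hp : 0 ≤ p := dist_nonneg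
    have hq : 0 ≤ q := dist_nonneg
    have hr : 0 ≤ r := dist_nonneg
    have h1 : r ≤ p + q := by
      have := dist_triangle (x a) (x c) (x b)
      simpa [p, q, r, dist_comm] using this
    have h2 : p ≤ r + q := by
      have := dist_triangle (x a) (x b) (x c)
      simpa [p, q, r, dist_comm] using this
    have h3 : q ≤ r + p := by
      have := dist_triangle (x b) (x a) (x c)
      simpa [p, q, r, dist_comm] using this
    nlinarith [sq_nonneg (s*p - t*q), sq_nonneg (s*p + t*q), sq_nonneg (s*t),
      mul_nonneg (mul_nonneg (by linarith : (0:ℝ) ≤ p + q - r) (by linarith : (0:ℝ) ≤ p + q + r))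
        (mul_nonneg (by linarith : (0:ℝ) ≤ r - p + q) (by linarith : (0:ℝ) ≤ r + p - q)),
      sq_nonneg (s*p*q), sq_nonneg (t*p*q)]
  refine ⟨key, ?_⟩
  rintro ⟨V, hV2, hVneg⟩
  -- the face opposite vertex 0
  set e1 := v 1 - v 3 with he1
  set e2 := v 2 - v 3 with he2
  set P := Submodule.span ℝ ({e1, e2} : Set (Fin 3 → ℝ)) with hP
  -- e1, e2 are linearly independent
  have hli' := (affineIndependent_iff_linearIndependent_vsub ℝ v 3).mp hv
  have hli : LinearIndependent ℝ ![e1, e2] := by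
    have hf : Function.Injective
        (![⟨1, by decide⟩, ⟨2, by decide⟩] : Fin 2 → {j : Fin 4 // j ≠ 3}) := by
      intro m n hmn
      fin_cases m <;> fin_cases n <;> simp_all
    have := hli'.comp _ hf
    convert this using 1
    funext m
    fin_cases m <;> simp [he1, he2, vsub_eq_sub]
    all_goals rfl
  have hPrank : Module.finrank ℝ P = 2 := by
    have hrange : Set.range ![e1, e2] = ({e1, e2} : Set (Fin 3 → ℝ)) := by
      ext w
      simp [Fin.exists_fin_two, or_comm]
    rw [hP, ← hrange, finrank_span_eq_card hli, Fintype.card_fin]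
  -- W is nonneg on P
  have hPnonneg : ∀ u ∈ P, 0 ≤ W u := by
    intro u hu
    refine key 0 u (Submodule.span_mono ?_ hu)
    rintro w (rfl | rfl)
    · exact ⟨1, 3, by decide, by decide, rfl⟩
    · exact ⟨2, 3, by decide, by decide, rfl⟩
  -- dimension count: V ⊓ P ≠ ⊥
  have hsum := Submodule.finrank_sup_add_finrank_inf_eq V P
  have hsup : Module.finrank ℝ ↥(V ⊔ P) ≤ 3 := by
    have := Submodule.finrank_le (V ⊔ P)
    simpa using this
  have hinf : 0 < Module.finrank ℝ ↥(V ⊓ P) := by omega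
  have hne : V ⊓ P ≠ ⊥ := by
    intro h
    rw [h, finrank_bot] at hinf
    exact lt_irrefl 0 hinf
  obtain ⟨u, hu, hu0⟩ := Submodule.exists_mem_ne_zero_of_ne_bot hne
  have hneg := hVneg u (Submodule.mem_inf.mp hu).1 hu0
  have hpos := hPnonneg u (Submodule.mem_inf.mp hu).2
  linarith
end

section
/- Let x₁,…,x₅ be points in a metric space X and let W be the associated quadratic form on ℝ⁴ with respect to a nondegenerate 4-simplex. Then W is nonnegative on every 2-dimensional linear subspace parallel to one of the ten 2-dimensional faces of the simplex; consequently W has at most two negative eigenvalues. -/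
private lemma plane_nonneg (W : QuadraticForm ℝ (Fin 4 → ℝ)) (e₁ e₂ : Fin 4 → ℝ)
    (a b c : ℝ) (ha : 0 ≤ a) (hb : 0 ≤ b) (hc : 0 ≤ c)
    (h1 : c ≤ a + b) (h2 : a ≤ b + c) (h3 : b ≤ a + c)
    (hA : W e₁ = a ^ 2) (hB : W e₂ = b ^ 2) (hC : W (e₁ - e₂) = c ^ 2) :
    ∀ u ∈ Submodule.span ℝ {e₁, e₂}, 0 ≤ W u := by
  intro u hu
  obtain ⟨s, t, rfl⟩ := Submodule.mem_span_pair.mp hu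
  have hP : QuadraticMap.polar (⇑W) e₁ e₂ = a ^ 2 + b ^ 2 - c ^ 2 := by
    have := QuadraticMap.map_add (⇑W) e₁ (-e₂)
    rw [show e₁ + -e₂ = e₁ - e₂ by ring, hC, QuadraticMap.map_neg, hB,
      QuadraticMap.polar_neg_right] at this
    rw [hA] at this
    linarith
  have hval : W (s • e₁ + t • e₂)
      = s ^ 2 * a ^ 2 + t ^ 2 * b ^ 2 + s * t * (a ^ 2 + b ^ 2 - c ^ 2) := by
    rw [QuadraticMap.map_add (⇑W) (s • e₁) (t • e₂), QuadraticMap.map_smul, QuadraticMap.map_smul,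
      QuadraticMap.polar_smul_left, QuadraticMap.polar_smul_right, hP, hA, hB]
    simp [smul_eq_mul]
    ring
  rw [hval]
  rcases le_total 0 (s * t) with hst | hst
  · nlinarith [sq_nonneg (s * a - t * b), mul_nonneg hst
      (mul_nonneg (by linarith : (0:ℝ) ≤ a + b - c) (by linarith : (0:ℝ) ≤ a + b + c))]
  · nlinarith [sq_nonneg (s * a + t * b), mul_nonneg (neg_nonneg.mpr hst)
      (mul_nonneg (by linarith : (0:ℝ) ≤ c - a + b) (by linarith : (0:ℝ) ≤ c + a - b))]

/-- the associated form of a quintuple is nonnegative on the ten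
planes parallel to the 2-faces of the 4-simplex; consequently it has at most two
negative eigenvalues (no 3-dimensional negative definite subspace). -/
theorem five_point_form_faces_nonneg (X : Type*) [MetricSpace X] (x : Fin 5 → X)
    (v : Fin 5 → (Fin 4 → ℝ)) (hv : AffineIndependent ℝ v)
    (W : QuadraticForm ℝ (Fin 4 → ℝ))
    (hW : ∀ i j, W (v i - v j) = dist (x i) (x j) ^ 2) :
    (∀ i j k : Fin 5, i ≠ j → i ≠ k → j ≠ k →
      ∀ u ∈ Submodule.span ℝ {v j - v i, v k - v i}, 0 ≤ W u) ∧
    ¬ ∃ V : Submodule ℝ (Fin 4 → ℝ), Module.finrank ℝ V = 3 ∧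
        ∀ u ∈ V, u ≠ 0 → W u < 0 := by
  have main : ∀ i j k : Fin 5, i ≠ j → i ≠ k → j ≠ k →
      ∀ u ∈ Submodule.span ℝ {v j - v i, v k - v i}, 0 ≤ W u := by
    intro i j k _ _ _
    refine plane_nonneg W _ _ (dist (x j) (x i)) (dist (x k) (x i)) (dist (x j) (x k))
      dist_nonneg dist_nonneg dist_nonneg ?_ ?_ ?_ (hW j i) (hW k i) ?_
    · have := dist_triangle (x j) (x i) (x k)
      have := dist_comm (x i) (x k)
      linarith
    · have := dist_triangle (x j) (x k) (x i)
      linarith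
    · have := dist_triangle (x k) (x j) (x i)
      have := dist_comm (x k) (x j)
      linarith
    · rw [show v j - v i - (v k - v i) = v j - v k by ring]
      exact hW j k
  refine ⟨main, ?_⟩
  rintro ⟨V, hV3, hVneg⟩
  -- the plane parallel to the face {v 0, v 1, v 2}
  set P : Submodule ℝ (Fin 4 → ℝ) := Submodule.span ℝ {v 1 - v 0, v 2 - v 0} with hPdef
  have hli : LinearIndependent ℝ (fun i : {i : Fin 5 // i ≠ 0} => v i - v 0) :=
    (affineIndependent_iff_linearIndependent_vsub ℝ v 0).mp hv
  have hli2 : LinearIndependent ℝ ![v 1 - v 0, v 2 - v 0] := by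
    have := hli.comp (fun b : Fin 2 => (⟨![1, 2] b, by fin_cases b <;> decide⟩ : {i : Fin 5 // i ≠ 0}))
      (by intro a b hab; fin_cases a <;> fin_cases b <;> simp_all)
    convert this using 1
    funext b
    fin_cases b <;> rfl
  have hPrank : Module.finrank ℝ P = 2 := by
    have : P = Submodule.span ℝ (Set.range ![v 1 - v 0, v 2 - v 0]) := by
      rw [hPdef]
      congr 1
      rw [Matrix.range_cons, Matrix.range_cons, Matrix.range_empty]
      simp
      exact Set.pair_comm _ _
    rw [this, finrank_span_eq_card hli2]
    simp
  have htot : Module.finrank ℝ (Fin 4 → ℝ) = 4 := by simp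
  have hsum := Submodule.finrank_sup_add_finrank_inf_eq V P
  have hsup : Module.finrank ℝ ↥(V ⊔ P) ≤ 4 := by
    simpa using Submodule.finrank_le (V ⊔ P)
  have hinf : 1 ≤ Module.finrank ℝ ↥(V ⊓ P) := by omega
  have hne : V ⊓ P ≠ ⊥ := by
    intro h
    rw [h] at hinf
    simp at hinf
  obtain ⟨u, hu, hune⟩ := Submodule.exists_mem_ne_zero_of_ne_bot hne
  have h1 : 0 ≤ W u := main 0 1 2 (by decide) (by decide) (by decide) u hu.2
  have h2 : W u < 0 := hVneg u hu.1 hune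
  linarith
end

section
/- Let x₁,…,x₄ be points in a metric space, v₁,…,v₄ the vertices of a nondegenerate tetrahedron in ℝ³, and W the associated quadratic form. If W(w) < 0 for some w ∈ ℝ³, then w is transversal to each of the four planes parallel to the faces of the tetrahedron, i.e., w does not lie in the span of {vⱼ - v_k : j,k ≠ i} for any i. -/
open QuadraticMap in
lemma core_nonneg {X : Type*} [MetricSpace X] (p q r : X)
    (W : QuadraticForm ℝ (Fin 3 → ℝ)) (a b : Fin 3 → ℝ)
    (ha : W a = dist p q ^ 2) (hb : W b = dist q r ^ 2)
    (hab : W (a + b) = dist p r ^ 2) (w : Fin 3 → ℝ)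
    (hw : w ∈ Submodule.span ℝ {a, b}) : 0 ≤ W w := by
  obtain ⟨s, t, rfl⟩ := Submodule.mem_span_pair.1 hw
  have hpolar : polar W a b = dist p r ^ 2 - dist p q ^ 2 - dist q r ^ 2 := by
    simp [polar, ha, hb, hab]
  have expand : W (s • a + t • b)
      = s ^ 2 * W a + t ^ 2 * W b + s * t * polar W a b := by
    have h1 : W (s • a + t • b) = W (s • a) + W (t • b) + polar W (s • a) (t • b) := by
        simp [polar]
    rw [h1, polar_smul_left, polar_smul_right, W.map_smul, W.map_smul]
    simp [smul_eq_mul]; ring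
  rw [expand, ha, hb, hpolar]
  set A := dist p q with hA
  set B := dist p r with hB
  set C := dist q r with hC
  have t1 : B ≤ A + C := dist_triangle p q r
  have t2 : A ≤ B + C := by rw [hA, hB, hC, dist_comm q r]; exact dist_triangle p r q
  have t3 : C ≤ A + B := by rw [hA, hB, hC, dist_comm p q]; exact dist_triangle q p r
  have nA : 0 ≤ A := dist_nonneg
  have nB : 0 ≤ B := dist_nonneg
  have nC : 0 ≤ C := dist_nonneg
  have hb1 : B ^ 2 - A ^ 2 - C ^ 2 ≤ 2 * A * C := by nlinarith
  have hb2 : -(2 * A * C) ≤ B ^ 2 - A ^ 2 - C ^ 2 := by nlinarith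
  rcases le_total 0 (s * t) with h | h
  · nlinarith [sq_nonneg (s * A - t * C), mul_le_mul_of_nonneg_left hb2 h]
  · nlinarith [sq_nonneg (s * A + t * C), mul_le_mul_of_nonpos_left hb1 h]
lemma aux_nonneg {X : Type*} [MetricSpace X] (x : Fin 4 → X)
    (v : Fin 4 → (Fin 3 → ℝ)) (W : QuadraticForm ℝ (Fin 3 → ℝ))
    (hW : ∀ i j, W (v i - v j) = dist (x i) (x j) ^ 2)
    (j₁ j₂ j₃ : Fin 4) (w : Fin 3 → ℝ)
    (hw : w ∈ Submodule.span ℝ {v j₁ - v j₂, v j₂ - v j₃}) : 0 ≤ W w := by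
  refine core_nonneg (x j₁) (x j₂) (x j₃) W _ _ (hW j₁ j₂) (hW j₂ j₃) ?_ w hw
  have : (v j₁ - v j₂) + (v j₂ - v j₃) = v j₁ - v j₃ := by abel
  rw [this, hW]

/-- a vector on which the associated form is negative is transversal
to each of the four planes parallel to the faces of the tetrahedron. -/
theorem negative_vector_transversal (X : Type*) [MetricSpace X] (x : Fin 4 → X)
    (v : Fin 4 → (Fin 3 → ℝ)) (hv : AffineIndependent ℝ v)
    (W : QuadraticForm ℝ (Fin 3 → ℝ))
    (hW : ∀ i j, W (v i - v j) = dist (x i) (x j) ^ 2)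
    (w : Fin 3 → ℝ) (hw : W w < 0) :
    ∀ i : Fin 4,
      w ∉ Submodule.span ℝ {u | ∃ j k, j ≠ i ∧ k ≠ i ∧ u = v j - v k} := by
  intro i hmem
  have key : ∀ j₁ j₂ j₃ : Fin 4,
      w ∈ Submodule.span ℝ {v j₁ - v j₂, v j₂ - v j₃} → False := fun j₁ j₂ j₃ h =>
    absurd (aux_nonneg x v W hW j₁ j₂ j₃ w h) (not_le.2 hw)
  fin_cases i
  · refine key 1 2 3 (Submodule.span_le.2 ?_ hmem)
    rintro u ⟨j, k, hj, hk, rfl⟩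
    fin_cases j <;> fin_cases k <;> simp only [Fin.reduceFinMk, Fin.mk_one] <;>
      first
        | exact absurd rfl hj
        | exact absurd rfl hk
        | (refine Submodule.mem_span_pair.2 ⟨0, 0, ?_⟩; module)
        | (refine Submodule.mem_span_pair.2 ⟨1, 0, ?_⟩; module)
        | (refine Submodule.mem_span_pair.2 ⟨0, 1, ?_⟩; module)
        | (refine Submodule.mem_span_pair.2 ⟨1, 1, ?_⟩; module)
        | (refine Submodule.mem_span_pair.2 ⟨-1, 0, ?_⟩; module)
        | (refine Submodule.mem_span_pair.2 ⟨0, -1, ?_⟩; module)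
        | (refine Submodule.mem_span_pair.2 ⟨-1, -1, ?_⟩; module)
  · refine key 0 2 3 (Submodule.span_le.2 ?_ hmem)
    rintro u ⟨j, k, hj, hk, rfl⟩
    fin_cases j <;> fin_cases k <;> simp only [Fin.reduceFinMk, Fin.mk_one] <;>
      first
        | exact absurd rfl hj
        | exact absurd rfl hk
        | (refine Submodule.mem_span_pair.2 ⟨0, 0, ?_⟩; module)
        | (refine Submodule.mem_span_pair.2 ⟨1, 0, ?_⟩; module)
        | (refine Submodule.mem_span_pair.2 ⟨0, 1, ?_⟩; module)
        | (refine Submodule.mem_span_pair.2 ⟨1, 1, ?_⟩; module)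
        | (refine Submodule.mem_span_pair.2 ⟨-1, 0, ?_⟩; module)
        | (refine Submodule.mem_span_pair.2 ⟨0, -1, ?_⟩; module)
        | (refine Submodule.mem_span_pair.2 ⟨-1, -1, ?_⟩; module)
  · refine key 0 1 3 (Submodule.span_le.2 ?_ hmem)
    rintro u ⟨j, k, hj, hk, rfl⟩
    fin_cases j <;> fin_cases k <;> simp only [Fin.reduceFinMk, Fin.mk_one] <;>
      first
        | exact absurd rfl hj
        | exact absurd rfl hk
        | (refine Submodule.mem_span_pair.2 ⟨0, 0, ?_⟩; module)
        | (refine Submodule.mem_span_pair.2 ⟨1, 0, ?_⟩; module)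
        | (refine Submodule.mem_span_pair.2 ⟨0, 1, ?_⟩; module)
        | (refine Submodule.mem_span_pair.2 ⟨1, 1, ?_⟩; module)
        | (refine Submodule.mem_span_pair.2 ⟨-1, 0, ?_⟩; module)
        | (refine Submodule.mem_span_pair.2 ⟨0, -1, ?_⟩; module)
        | (refine Submodule.mem_span_pair.2 ⟨-1, -1, ?_⟩; module)
  · refine key 0 1 2 (Submodule.span_le.2 ?_ hmem)
    rintro u ⟨j, k, hj, hk, rfl⟩
    fin_cases j <;> fin_cases k <;> simp only [Fin.reduceFinMk, Fin.mk_one] <;>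
      first
        | exact absurd rfl hj
        | exact absurd rfl hk
        | (refine Submodule.mem_span_pair.2 ⟨0, 0, ?_⟩; module)
        | (refine Submodule.mem_span_pair.2 ⟨1, 0, ?_⟩; module)
        | (refine Submodule.mem_span_pair.2 ⟨0, 1, ?_⟩; module)
        | (refine Submodule.mem_span_pair.2 ⟨1, 1, ?_⟩; module)
        | (refine Submodule.mem_span_pair.2 ⟨-1, 0, ?_⟩; module)
        | (refine Submodule.mem_span_pair.2 ⟨0, -1, ?_⟩; module)
        | (refine Submodule.mem_span_pair.2 ⟨-1, -1, ?_⟩; module)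
end

section
/- Let x₁,…,x₄ be points in a metric space, W the associated quadratic form on ℝ³ with respect to a nondegenerate tetrahedron with vertices v₁,…,v₄, and suppose W(w) < 0. Let P : ℝ³ → ℝ² be a linear projection with kernel spanned by w onto a plane transversal to w. Then the four projected points P(v₁),…,P(v₄) are in general position: no three of them lie on a common line. -/
set_option maxHeartbeats 1000000 in
/-- projecting the tetrahedron's vertices along a negative vector
yields four points in general position (no three collinear). -/
theorem projection_general_position (X : Type*) [MetricSpace X] (x : Fin 4 → X)
    (v : Fin 4 → (Fin 3 → ℝ)) (hv : AffineIndependent ℝ v)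
    (W : QuadraticForm ℝ (Fin 3 → ℝ))
    (hW : ∀ i j, W (v i - v j) = dist (x i) (x j) ^ 2)
    (w : Fin 3 → ℝ) (hw : W w < 0)
    (P : (Fin 3 → ℝ) →ₗ[ℝ] (Fin 2 → ℝ))
    (hker : LinearMap.ker P = Submodule.span ℝ {w}) :
    ∀ i j k : Fin 4, i ≠ j → i ≠ k → j ≠ k →
      AffineIndependent ℝ ![P (v i), P (v j), P (v k)] := by
  intro i j k hij hik hjk
  by_contra hdep
  rw [affineIndependent_iff] at hdep
  push_neg at hdep
  obtain ⟨s, g, hsum, hvsum, m, hm, hgm⟩ := hdep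
  -- extend g by zero to all of Fin 3
  set g' : Fin 3 → ℝ := fun e => if e ∈ s then g e else 0 with hg'
  have hsum' : ∑ e, g' e = 0 := by
    rw [← hsum, Finset.sum_ite_mem, Finset.univ_inter]
  have hvsum' : ∑ e, g' e • (![P (v i), P (v j), P (v k)] e) = 0 := by
    rw [← hvsum,
      ← Finset.sum_subset s.subset_univ (fun e _ hes => by simp [g', hes])]
    exact Finset.sum_congr rfl fun e he => by simp [g', he]
  have hg'm : g' m ≠ 0 := by simpa [g', hm] using hgm
  set a := g' 0 with ha
  set b := g' 1 with hb
  set c := g' 2 with hc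
  have habc : a + b + c = 0 := by rw [ha, hb, hc, ← Fin.sum_univ_three g', hsum']
  have hP : a • P (v i) + b • P (v j) + c • P (v k) = 0 := by
    have := hvsum'
    rw [Fin.sum_univ_three] at this
    simpa using this
  set u : Fin 3 → ℝ := a • v i + b • v j + c • v k with hu
  -- u is nonzero
  have hinj : Function.Injective ![i, j, k] := by
    intro p q
    fin_cases p <;> fin_cases q <;> simp_all <;> intro h <;> subst h <;> simp_all
  have hvf : AffineIndependent ℝ (v ∘ ![i, j, k]) := hv.comp_embedding ⟨![i, j, k], hinj⟩
  have hune : u ≠ 0 := by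
    intro hu0
    apply hg'm
    refine affineIndependent_iff.mp hvf Finset.univ g' hsum' ?_ m (Finset.mem_univ m)
    rw [Fin.sum_univ_three]
    simpa using hu0
  -- u is in the kernel of P, hence a multiple of w
  have hPu : P u = 0 := by
    rw [hu]
    simp only [map_add, map_smul]
    exact hP
  have humem : u ∈ Submodule.span ℝ {w} := by
    rw [← hker]; exact hPu
  obtain ⟨t, ht⟩ := Submodule.mem_span_singleton.mp humem
  have htne : t ≠ 0 := by
    rintro rfl
    rw [zero_smul] at ht
    exact hune ht.symm
  -- W u < 0
  have hWuneg : W u < 0 := by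
    rw [← ht, QuadraticMap.map_smul, smul_eq_mul]
    exact mul_neg_of_pos_of_neg (mul_self_pos.mpr htne) hw
  -- but W u ≥ 0 by the triangle inequality
  have hadd : ∀ y z, W (y + z) = W y + W z + QuadraticMap.polar W y z := by
    intro y z
    simp [QuadraticMap.polar]
  clear_value a b c
  set e1 : Fin 3 → ℝ := v i - v k with he1
  set e2 : Fin 3 → ℝ := v j - v k with he2
  have hue : u = a • e1 + b • e2 := by
    have hc' : c = -(a + b) := by linarith
    rw [hu, hc', he1, he2]
    module
  have hpolar : QuadraticMap.polar W e1 e2 = W e1 + W e2 - W (v i - v j) := by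
    have h12 : v i - v j = e1 + -e2 := by rw [he1, he2]; abel
    rw [h12, hadd, QuadraticMap.polar_neg_right, QuadraticMap.map_neg]
    ring
  have hkey : W u = a ^ 2 * W e1 + b ^ 2 * W e2
      + a * b * (W e1 + W e2 - W (v i - v j)) := by
    rw [hue, hadd, QuadraticMap.map_smul, QuadraticMap.map_smul,
      QuadraticMap.polar_smul_left, QuadraticMap.polar_smul_right, hpolar,
      smul_eq_mul, smul_eq_mul, smul_eq_mul, smul_eq_mul]
    ring
  have hWunn : 0 ≤ W u := by
    rw [hkey, hW i k, hW j k, hW i j]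
    set p := dist (x i) (x j) with hp
    set q := dist (x i) (x k) with hq
    set r := dist (x j) (x k) with hr
    have hp0 : 0 ≤ p := dist_nonneg
    have hq0 : 0 ≤ q := dist_nonneg
    have hr0 : 0 ≤ r := dist_nonneg
    have h1 : p ≤ q + r := by rw [hp, hq, hr, dist_comm (x j) (x k)]; exact dist_triangle _ _ _
    have h2 : q ≤ p + r := by rw [hp, hq, hr]; exact dist_triangle _ _ _
    have h3 : r ≤ p + q := by rw [hp, hq, hr, dist_comm (x i) (x j)]; exact dist_triangle _ _ _
    rcases le_or_gt 0 (a * b) with hab | hab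
    · nlinarith [sq_nonneg (a * q - b * r), mul_nonneg (mul_nonneg hab (by linarith : (0:ℝ) ≤ q + r - p)) (by linarith : (0:ℝ) ≤ q + r + p)]
    · nlinarith [sq_nonneg (a * q + b * r), mul_nonneg (mul_nonneg (le_of_lt (neg_pos.mpr hab)) (by linarith : (0:ℝ) ≤ p + r - q)) (by linarith : (0:ℝ) ≤ p + q - r)]
  linarith
end

section
/- Any four points x₁, x₂, x₃, x₄ in a Hilbert space (or in a convex subset of a Hilbert space) have nonnegative associated quadratic form: the unique quadratic form W on ℝ³ with W(vᵢ - vⱼ) = ‖xᵢ - xⱼ‖² for the vertices v₁,…,v₄ of a nondegenerate tetrahedron satisfies W(v) ≥ 0 for all v ∈ ℝ³. -/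
/-- four points in a (real) inner product space have nonnegative
associated quadratic form. -/
theorem hilbert_quadruple_form_nonneg (H : Type*) [NormedAddCommGroup H]
    [InnerProductSpace ℝ H] (x : Fin 4 → H)
    (v : Fin 4 → (Fin 3 → ℝ)) (hv : AffineIndependent ℝ v)
    (W : QuadraticForm ℝ (Fin 3 → ℝ))
    (hW : ∀ i j, W (v i - v j) = ‖x i - x j‖ ^ 2) :
    ∀ u, 0 ≤ W u := by
  intro u
  classical
  set B := QuadraticMap.associated (R := ℝ) W with hBdef
  have hBQ : ∀ a, B a a = W a := fun a => QuadraticMap.associated_eq_self_apply ℝ W a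
  have hBsymm : ∀ a b, B a b = B b a := by
    intro a b
    rw [hBdef]
    simp only [QuadraticMap.associated_apply]
    rw [add_comm a b]
    ring_nf
  -- cross values of B
  have hcross : ∀ i j : Fin 4,
      B (v i - v 3) (v j - v 3) = inner ℝ (x i - x 3) (x j - x 3) := by
    intro i j
    have h2 : ∀ a b : Fin 3 → ℝ, B a b = (W a + W b - W (a - b)) / 2 := by
      intro a b
      have hsub : W (a - b) = B a a - 2 * B a b + B b b := by
        rw [← hBQ]
        simp only [map_sub, LinearMap.sub_apply]
        rw [hBsymm b a]
        ring
      rw [hBQ, hBQ] at hsub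
      linarith
    have hvv : (v i - v 3) - (v j - v 3) = v i - v j := by abel
    have hxx : (x i - x 3) - (x j - x 3) = x i - x j := by abel
    rw [h2, hvv, hW, hW, hW]
    have hinner : ‖(x i - x 3) - (x j - x 3)‖ ^ 2 =
        ‖x i - x 3‖ ^ 2 - 2 * inner ℝ (x i - x 3) (x j - x 3) + ‖x j - x 3‖ ^ 2 := by
      rw [@norm_sub_sq_real]
    rw [hxx] at hinner
    linarith
  -- basis of differences
  haveI : Nonempty {i : Fin 4 // i ≠ 3} := ⟨⟨0, by decide⟩⟩
  have hli := (affineIndependent_iff_linearIndependent_vsub ℝ v 3).mp hv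
  have hcard : Fintype.card {i : Fin 4 // i ≠ 3} = Module.finrank ℝ (Fin 3 → ℝ) := by
    simp [Fintype.card_subtype_compl]
  let b := basisOfLinearIndependentOfCardEqFinrank hli hcard
  have hb : ∀ i : {i : Fin 4 // i ≠ 3}, b i = v i - v 3 := fun i => by
    simp only [b, coe_basisOfLinearIndependentOfCardEqFinrank]
    rfl
  set c := b.repr u with hc
  have hu : u = ∑ i, c i • (v (i : {i : Fin 4 // i ≠ 3}) - v 3) := by
    conv_lhs => rw [← b.sum_repr u]
    exact Finset.sum_congr rfl fun i _ => by rw [hb]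
  set y : {i : Fin 4 // i ≠ 3} → H := fun i => x i - x 3 with hy
  have hL : W u = ∑ i, ∑ j, c i * c j *
      B (v (i : {i : Fin 4 // i ≠ 3}) - v 3) (v (j : {i : Fin 4 // i ≠ 3}) - v 3) := by
    rw [← hBQ, hu]
    simp only [map_sum, LinearMap.sum_apply, map_smul, LinearMap.smul_apply, smul_eq_mul,
      Finset.mul_sum]
    exact Finset.sum_congr rfl fun i _ => Finset.sum_congr rfl fun j _ => by rw [hBsymm]; ring
  set z : H := ∑ i, c i • y i with hz
  have hR : (inner ℝ z z : ℝ) = ∑ i, ∑ j, c i * c j * inner ℝ (y i) (y j) := by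
    rw [hz]
    simp only [sum_inner, inner_sum, real_inner_smul_left, real_inner_smul_right,
      Finset.mul_sum]
    exact Finset.sum_congr rfl fun i _ => Finset.sum_congr rfl fun j _ => by rw [real_inner_comm]; ring
  have key : W u = inner ℝ z z := by
    rw [hL, hR]
    exact Finset.sum_congr rfl fun i _ => Finset.sum_congr rfl fun j _ => by
      rw [hcross]
  rw [key]
  exact real_inner_self_nonneg
end

section
/- A point array x₁,…,xₙ in a metric space embeds isometrically into ℝ^{n-1} if and only if the Gram-type matrix G with entries Gᵢⱼ = ½ (dist(xᵢ,xₙ)² + dist(xⱼ,xₙ)² - dist(xᵢ,xⱼ)²), for 1 ≤ i, j ≤ n-1, is positive semidefinite. -/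
open scoped RealInnerProductSpace

private lemma sq_eq_imp_eq {a b : ℝ} (ha : 0 ≤ a) (hb : 0 ≤ b) (h : a ^ 2 = b ^ 2) :
    a = b := by nlinarith

private lemma inner_euc {n : ℕ} (z w : EuclideanSpace ℝ (Fin n)) :
    ⟪z, w⟫ = (‖z‖ ^ 2 + ‖w‖ ^ 2 - ‖z - w‖ ^ 2) / 2 := by
  have := norm_sub_sq_real z w
  linarith

open scoped MatrixOrder in
private lemma psd_iff_eq_transpose_mul_self {n : ℕ} {A : Matrix (Fin n) (Fin n) ℝ} :
    A.PosSemidef ↔ ∃ B : Matrix (Fin n) (Fin n) ℝ, A = B.conjTranspose * B := by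
  constructor
  · intro h
    obtain ⟨B, hB⟩ := CStarAlgebra.nonneg_iff_eq_star_mul_self.mp h.nonneg
    exact ⟨B, hB⟩
  · rintro ⟨B, rfl⟩
    exact Matrix.posSemidef_conjTranspose_mul_self B

private lemma inner_euc_sum {n : ℕ} (z w : EuclideanSpace ℝ (Fin n)) :
    ⟪z, w⟫ = ∑ k, z k * w k := by
  simp [PiLp.inner_apply, RCLike.inner_apply, mul_comm]

/-- Schoenberg criterion -- the array embeds isometrically into
ℝ^{n-1} iff the Gram-type matrix is positive semidefinite. -/
theorem schoenberg_criterion (n : ℕ) (X : Type*) [MetricSpace X]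
    (x : Fin (n + 1) → X)
    (G : Matrix (Fin n) (Fin n) ℝ)
    (hG : ∀ i j, G i j =
      (dist (x i.castSucc) (x (Fin.last n)) ^ 2 +
       dist (x j.castSucc) (x (Fin.last n)) ^ 2 -
       dist (x i.castSucc) (x j.castSucc) ^ 2) / 2) :
    (∃ y : Fin (n + 1) → EuclideanSpace ℝ (Fin n),
        ∀ i j, ‖y i - y j‖ = dist (x i) (x j)) ↔ G.PosSemidef := by
  constructor
  · rintro ⟨y, hy⟩
    set z : Fin n → EuclideanSpace ℝ (Fin n) :=
      fun i => y i.castSucc - y (Fin.last n) with hz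
    have hGz : ∀ i j, G i j = ⟪z i, z j⟫ := by
      intro i j
      have hzz : z i - z j = y i.castSucc - y j.castSucc := by
        simp [hz, sub_sub_sub_cancel_right]
      rw [inner_euc, hzz, hz]
      simp only [hy]
      rw [hG]
    rw [psd_iff_eq_transpose_mul_self]
    refine ⟨Matrix.of fun k i => z i k, ?_⟩
    ext i j
    rw [hGz i j, inner_euc_sum]
    simp [Matrix.mul_apply, Matrix.conjTranspose_apply]
  · intro hPSD
    obtain ⟨B, hB⟩ := psd_iff_eq_transpose_mul_self.mp hPSD
    set w : Fin n → EuclideanSpace ℝ (Fin n) :=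
      fun i => (WithLp.toLp 2 (fun k => B k i) : EuclideanSpace ℝ (Fin n)) with hw
    have hinner : ∀ i j, ⟪w i, w j⟫ = G i j := by
      intro i j
      rw [inner_euc_sum, hB]
      simp [Matrix.mul_apply, Matrix.conjTranspose_apply, hw]
    have hnorm : ∀ i, ‖w i‖ ^ 2 = dist (x i.castSucc) (x (Fin.last n)) ^ 2 := by
      intro i
      rw [← real_inner_self_eq_norm_sq, hinner, hG]
      simp [dist_self]
    have hnd : ∀ i, ‖w i‖ = dist (x i.castSucc) (x (Fin.last n)) := fun i =>
      sq_eq_imp_eq (norm_nonneg _) dist_nonneg (hnorm i)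
    have hsub : ∀ i j, ‖w i - w j‖ = dist (x i.castSucc) (x j.castSucc) := by
      intro i j
      refine sq_eq_imp_eq (norm_nonneg _) dist_nonneg ?_
      have h1 := norm_sub_sq_real (w i) (w j)
      rw [hinner, hG, hnorm, hnorm] at h1
      rw [h1]
      ring
    refine ⟨Fin.lastCases 0 w, fun i j => ?_⟩
    induction i using Fin.lastCases with
    | last =>
      induction j using Fin.lastCases with
      | last => simp [dist_self]
      | cast j =>
        simp only [Fin.lastCases_last, Fin.lastCases_castSucc, zero_sub, norm_neg]
        rw [hnd, dist_comm]
    | cast i =>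
      induction j using Fin.lastCases with
      | last =>
        simp only [Fin.lastCases_last, Fin.lastCases_castSucc, sub_zero]
        exact hnd i
      | cast j =>
        simp only [Fin.lastCases_castSucc]
        exact hsub i j
end

section
/- Let x₁,…,x₄ be four points in a real inner product space H (so the quadruple is 'Euclidean'). Then the associated quadratic form W on ℝ³ has no negative eigenvalues; in particular such a quadruple is of neither type ⊠(3) nor type ⊠(4). -/
/-- for a quadruple in a real inner product space the associated
form has no negative eigenvalues, i.e. it is nonnegative everywhere. -/
theorem euclidean_quadruple_no_negative (H : Type*) [NormedAddCommGroup H]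
    [InnerProductSpace ℝ H] (x : Fin 4 → H)
    (v : Fin 4 → (Fin 3 → ℝ)) (hv : AffineIndependent ℝ v)
    (W : QuadraticForm ℝ (Fin 3 → ℝ))
    (hW : ∀ i j, W (v i - v j) = ‖x i - x j‖ ^ 2) :
    ∀ u, 0 ≤ W u := by
  classical
  -- linear independence of the difference vectors
  have hli0 := (affineIndependent_iff_linearIndependent_vsub ℝ v (0 : Fin 4)).mp hv
  have hinj : Function.Injective
      (fun i : Fin 3 => (⟨i.succ, Fin.succ_ne_zero i⟩ : {j : Fin 4 // j ≠ 0})) := by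
    intro a b hab
    simpa [Fin.succ_inj] using congrArg Subtype.val hab
  have hli : LinearIndependent ℝ (fun i : Fin 3 => v i.succ - v 0) := by
    have := hli0.comp _ hinj
    simpa [vsub_eq_sub, Function.comp_def] using this
  have hcard : Fintype.card (Fin 3) = Module.finrank ℝ (Fin 3 → ℝ) := by simp
  set b : Module.Basis (Fin 3) ℝ (Fin 3 → ℝ) :=
    basisOfLinearIndependentOfCardEqFinrank hli hcard with hb
  have hbi : ∀ i, b i = v i.succ - v 0 := by
    intro i
    rw [hb, coe_basisOfLinearIndependentOfCardEqFinrank]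
  -- the linear map to H
  set T : (Fin 3 → ℝ) →ₗ[ℝ] H := b.constr ℝ (fun i => x i.succ - x 0) with hT
  have hTb : ∀ i, T (b i) = x i.succ - x 0 := fun i => b.constr_basis ℝ _ i
  -- associated bilinear forms
  set B : LinearMap.BilinForm ℝ (Fin 3 → ℝ) := QuadraticMap.associatedHom ℝ W with hB
  have hBsymm : ∀ a c, B a c = B c a := fun a c =>
    QuadraticMap.associated_isSymm ℝ W a c
  have hBdiag : ∀ a, B a a = W a := fun a => QuadraticMap.associated_eq_self_apply ℝ W a
  -- polarization: B a c = (W a + W c - W (a - c)) / 2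
  have hpol : ∀ a c, B a c = (W a + W c - W (a - c)) / 2 := by
    intro a c
    have hexp : W (a - c) = B a a - B a c - B c a + B c c := by
      have : W (a - c) = B (a - c) (a - c) := (hBdiag _).symm
      rw [this]
      simp only [map_sub, LinearMap.sub_apply]
      ring
    rw [hBsymm c a] at hexp
    have h1 := hBdiag a
    have h2 := hBdiag c
    linarith
  -- B on basis vectors equals the inner product of images under T
  have hBbasis : ∀ i j, B (b i) (b j) = inner ℝ (T (b i)) (T (b j)) := by
    intro i j
    have hdiff : b i - b j = v i.succ - v j.succ := by
      rw [hbi, hbi]; abel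
    have e1 : W (b i) = ‖x i.succ - x 0‖ ^ 2 := by rw [hbi]; exact hW i.succ 0
    have e2 : W (b j) = ‖x j.succ - x 0‖ ^ 2 := by rw [hbi]; exact hW j.succ 0
    have e3 : W (b i - b j) = ‖x i.succ - x j.succ‖ ^ 2 := by
      rw [hdiff]; exact hW i.succ j.succ
    rw [hpol, e1, e2, e3, hTb, hTb]
    have key : (inner ℝ (x i.succ - x 0) (x j.succ - x 0) : ℝ)
        = (‖x i.succ - x 0‖ ^ 2 + ‖x j.succ - x 0‖ ^ 2 - ‖x i.succ - x j.succ‖ ^ 2) / 2 := by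
      have hsub : x i.succ - x j.succ = (x i.succ - x 0) - (x j.succ - x 0) := by abel
      rw [hsub, ← real_inner_self_eq_norm_sq, ← real_inner_self_eq_norm_sq,
        ← real_inner_self_eq_norm_sq]
      simp only [inner_sub_left, inner_sub_right]
      rw [real_inner_comm (x 0) (x j.succ), real_inner_comm (x 0) (x i.succ),
        real_inner_comm (x j.succ) (x i.succ)]
      ring
    rw [key]
  -- hence B u u = ⟪T u, T u⟫ for every u, by bilinearity
  have hmain : ∀ u, B u u = inner ℝ (T u) (T u) := by
    intro u
    rw [← b.sum_repr u]
    simp only [map_sum, map_smul, LinearMap.coe_sum, Finset.sum_apply,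
      LinearMap.smul_apply, smul_eq_mul, inner_sum, sum_inner,
      real_inner_smul_left, real_inner_smul_right]
    refine Finset.sum_congr rfl fun i _ => ?_
    rw [Finset.mul_sum]
    refine Finset.sum_congr rfl fun j _ => ?_
    rw [hBbasis]
  intro u
  rw [← hBdiag u, hmain u]
  exact real_inner_self_nonneg
end

section
/- For five points x₁,…,x₅ in a real inner product space, the associated quadratic form W on ℝ⁴ is positive semidefinite; in particular, a Euclidean 5-point array is of none of the types ⌂(3), ⌂(4), ⌂(5) (which all require W to have exactly two negative eigenvalues). -/
open Finset RealInnerProductSpace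

/-- for five points in a real inner product space the associated
form on ℝ⁴ is positive semidefinite. -/
theorem euclidean_quintuple_form_nonneg (H : Type*) [NormedAddCommGroup H]
    [InnerProductSpace ℝ H] (x : Fin 5 → H)
    (v : Fin 5 → (Fin 4 → ℝ)) (hv : AffineIndependent ℝ v)
    (W : QuadraticForm ℝ (Fin 4 → ℝ))
    (hW : ∀ i j, W (v i - v j) = ‖x i - x j‖ ^ 2) :
    ∀ u, 0 ≤ W u := by
  intro u
  classical
  haveI : Nonempty {i : Fin 5 // i ≠ 0} := ⟨⟨1, by decide⟩⟩
  have hli : LinearIndependent ℝ (fun i : {i : Fin 5 // i ≠ 0} => v i -ᵥ v 0) :=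
    (affineIndependent_iff_linearIndependent_vsub ℝ v 0).mp hv
  have hcard : Fintype.card {i : Fin 5 // i ≠ 0} = Module.finrank ℝ (Fin 4 → ℝ) := by
    simp [Fintype.card_subtype_compl]
  let b := basisOfLinearIndependentOfCardEqFinrank hli hcard
  have hb : ∀ i, b i = v i - v 0 := fun i => by
    rw [coe_basisOfLinearIndependentOfCardEqFinrank]; rfl
  set c : {i : Fin 5 // i ≠ 0} → ℝ := fun i => b.repr u i with hc
  have hu : u = ∑ i, c i • (v i - v 0) := by
    conv_lhs => rw [← b.sum_repr u]
    exact Finset.sum_congr rfl fun i _ => by rw [hb]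
  set P := W.polarBilin with hP
  -- value of the polar form on the basis vectors
  have hPval : ∀ (i j : {i : Fin 5 // i ≠ 0}),
      P (v i - v 0) (v j - v 0) = 2 * ⟪x i - x 0, x j - x 0⟫ := by
    intro i j
    have h1 : QuadraticMap.polar W (v i - v 0) (v j - v 0)
        = W (v i - v 0) + W (v j - v 0) - W ((v i - v 0) - (v j - v 0)) := by
      have e1 : QuadraticMap.polar W (v i - v 0) (-(v j - v 0))
          = W ((v i - v 0) - (v j - v 0)) - W (v i - v 0) - W (v j - v 0) := by
        rw [QuadraticMap.polar, ← sub_eq_add_neg, QuadraticMap.map_neg]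
      rw [QuadraticMap.polar_neg_right] at e1
      linarith
    have h2 : (v i - v 0) - (v j - v 0) = v i - v j := by abel
    have h3 : ‖x i - x j‖ ^ 2 = ‖x i - x 0‖ ^ 2 - 2 * ⟪x i - x 0, x j - x 0⟫
        + ‖x j - x 0‖ ^ 2 := by
      have h4 : x i - x j = (x i - x 0) - (x j - x 0) := by abel
      rw [h4, @norm_sub_sq_real]
    have : P (v i - v 0) (v j - v 0) = QuadraticMap.polar W (v i - v 0) (v j - v 0) := rfl
    rw [this, h1, h2, hW i 0, hW j 0, hW i j, h3]
    ring
  -- W u = half the polar form evaluated at (u, u)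
  have hWu : W u = (1 / 2) * P u u := by
    have : P u u = QuadraticMap.polar W u u := rfl
    rw [this, QuadraticMap.polar_self]
    ring
  have hexp : P u u = ∑ i, ∑ j, c i * c j * (2 * ⟪x i - x 0, x j - x 0⟫) := by
    conv_lhs => rw [hu]
    simp only [map_sum, LinearMap.sum_apply, map_smul, LinearMap.smul_apply,
      smul_eq_mul]
    rw [Finset.sum_comm]
    refine Finset.sum_congr rfl fun i _ => ?_
    rw [Finset.mul_sum]
    refine Finset.sum_congr rfl fun j _ => ?_
    rw [hPval j i]
    ring
  have hinner : ∑ i, ∑ j, c i * c j * ⟪x i - x 0, x j - x 0⟫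
      = ⟪∑ i, c i • (x i - x 0), ∑ j, c j • (x j - x 0)⟫ := by
    rw [sum_inner]
    refine Finset.sum_congr rfl fun i _ => ?_
    rw [inner_sum]
    refine Finset.sum_congr rfl fun j _ => ?_
    rw [real_inner_smul_left, real_inner_smul_right]
    ring
  have : W u = ⟪∑ i, c i • (x i - x 0), ∑ j, c j • (x j - x 0)⟫ := by
    rw [hWu, hexp, ← hinner]
    rw [Finset.mul_sum]
    refine Finset.sum_congr rfl fun i _ => ?_
    rw [Finset.mul_sum]
    refine Finset.sum_congr rfl fun j _ => ?_
    ring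
  rw [this]
  exact real_inner_self_nonneg
end
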